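/- Let Δ = {(x,y,z) : x,y,z ≥ 0, x+y+z = 1} and suppose λ₁: int(Δ) → (0,1) is a real-analytic convex function with λ₁ < 1 everywhere on int(Δ), such that convexity would force λ₁ = 1 at the boundary endpoints of any line on which it is constant. Then λ₁ is strictly convex on int(Δ): there do not exist three distinct collinear points X₁, X₂, X₃ ∈ int(Δ) with λ₁(X₁) = λ₁(X₂) = λ₁(X₃). -/

import Mathlib

open Finset

/-- A convex function on a subset of `ℝ` which takes the same value at three
ordered points `p < m < q` is constant on `[p, q]`. -/
lemma convexOn_const_between {T : Set ℝ} {g : ℝ → ℝ} (hg : ConvexOn ℝ T g)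
    {p m q c : ℝ} (hp : p ∈ T) (hq : q ∈ T) (h1 : p < m) (h2 : m < q)
    (hgp : g p = c) (hgm : g m = c) (hgq : g q = c) :
    ∀ x, p ≤ x → x ≤ q → g x = c := by
  intro x hpx hxq
  have hxT : x ∈ T := by
    have := hg.1.segment_subset hp hq
    rw [segment_eq_Icc (h1.trans h2).le] at this
    exact this ⟨hpx, hxq⟩
  -- upper bound : g x ≤ c
  have hupper : g x ≤ c := by
    rcases eq_or_lt_of_le hpx with h | h
    · rw [← h, hgp]
    rcases eq_or_lt_of_le hxq with h' | h'
    · rw [h', hgq]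
    have hq0 : (0:ℝ) < q - p := by linarith
    have ha : (0:ℝ) ≤ (q - x)/(q - p) := by apply div_nonneg <;> linarith
    have hb : (0:ℝ) ≤ (x - p)/(q - p) := by apply div_nonneg <;> linarith
    have hab : (q - x)/(q - p) + (x - p)/(q - p) = 1 := by field_simp; ring
    have key := hg.2 hp hq ha hb hab
    have hxrep : ((q - x)/(q - p)) • p + ((x - p)/(q - p)) • q = x := by
      simp only [smul_eq_mul]; field_simp; ring
    rw [hxrep] at key
    rw [hgp, hgq, smul_eq_mul, smul_eq_mul] at key
    calc g x ≤ (q - x)/(q - p) * c + (x - p)/(q - p) * c := key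
      _ = c := by field_simp; ring
  -- lower bound : g x ≥ c
  have hlower : c ≤ g x := by
    rcases le_or_gt x m with hxm | hmx
    · -- m between x and q
      rcases eq_or_lt_of_le hxm with h | h
      · rw [h, hgm]
      have hq0 : (0:ℝ) < q - x := by linarith
      have ha : (0:ℝ) ≤ (q - m)/(q - x) := by apply div_nonneg <;> linarith
      have hb : (0:ℝ) ≤ (m - x)/(q - x) := by apply div_nonneg <;> linarith
      have hab : (q - m)/(q - x) + (m - x)/(q - x) = 1 := by field_simp; ring
      have key := hg.2 hxT hq ha hb hab
      have hmrep : ((q - m)/(q - x)) • x + ((m - x)/(q - x)) • q = m := by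
        simp only [smul_eq_mul]; field_simp; ring
      rw [hmrep, hgm, hgq, smul_eq_mul, smul_eq_mul] at key
      by_contra hcon
      push_neg at hcon
      have hApos : (0:ℝ) < (q - m)/(q - x) := div_pos (by linarith) hq0
      have e1 := mul_lt_mul_of_pos_left hcon hApos
      have e2 : ((q - m)/(q - x) + (m - x)/(q - x)) * c = c := by rw [hab, one_mul]
      have e3 : ((q - m)/(q - x) + (m - x)/(q - x)) * c
          = (q - m)/(q - x) * c + (m - x)/(q - x) * c := add_mul _ _ _
      linarith
    · -- m between p and x
      have hp0 : (0:ℝ) < x - p := by linarith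
      have ha : (0:ℝ) ≤ (x - m)/(x - p) := by apply div_nonneg <;> linarith
      have hb : (0:ℝ) ≤ (m - p)/(x - p) := by apply div_nonneg <;> linarith
      have hab : (x - m)/(x - p) + (m - p)/(x - p) = 1 := by field_simp; ring
      have key := hg.2 hp hxT ha hb hab
      have hmrep : ((x - m)/(x - p)) • p + ((m - p)/(x - p)) • x = m := by
        simp only [smul_eq_mul]; field_simp; ring
      rw [hmrep, hgm, hgp, smul_eq_mul, smul_eq_mul] at key
      by_contra hcon
      push_neg at hcon
      have hBpos : (0:ℝ) < (m - p)/(x - p) := div_pos (by linarith) hp0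
      have e1 := mul_lt_mul_of_pos_left hcon hBpos
      have e2 : ((x - m)/(x - p) + (m - p)/(x - p)) * c = c := by rw [hab, one_mul]
      have e3 : ((x - m)/(x - p) + (m - p)/(x - p)) * c
          = (x - m)/(x - p) * c + (m - p)/(x - p) * c := add_mul _ _ _
      linarith
  linarith

/-- a real-analytic convex function `λ₁ < 1` on the open simplex
`int(Δ)`, such that constancy on any whole line in `int(Δ)` would force the
value `1`, is strictly convex: there are no three distinct collinear points of
`int(Δ)` where `λ₁` takes the same value. -/
theorem strictly_convex_of_analytic_convex
    (S : Set (Fin 3 → ℝ))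
    (hS : S = {v : Fin 3 → ℝ | (∀ i, 0 < v i) ∧ (∑ i, v i) = 1})
    (f : (Fin 3 → ℝ) → ℝ)
    (hconv : ConvexOn ℝ S f)
    (hanalytic : AnalyticOn ℝ f S)
    (hlt : ∀ X ∈ S, f X < 1)
    (hline : ∀ X Y, X ∈ S → Y ∈ S → X ≠ Y →
      (∀ t : ℝ, X + t • (Y - X) ∈ S → f (X + t • (Y - X)) = f X) → f X = 1) :
    ¬ ∃ X₁ X₂ X₃, X₁ ∈ S ∧ X₂ ∈ S ∧ X₃ ∈ S ∧
      X₁ ≠ X₂ ∧ X₁ ≠ X₃ ∧ X₂ ≠ X₃ ∧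
      Collinear ℝ ({X₁, X₂, X₃} : Set (Fin 3 → ℝ)) ∧
      f X₁ = f X₂ ∧ f X₁ = f X₃ := by
  rintro ⟨X₁, X₂, X₃, hX₁, hX₂, hX₃, h12, h13, h23, hcol, hf12, hf13⟩
  set d : Fin 3 → ℝ := X₂ - X₁ with hd
  set φ : ℝ → (Fin 3 → ℝ) := fun t => X₁ + t • d with hφ
  set T : Set ℝ := φ ⁻¹' S with hT
  set g : ℝ → ℝ := f ∘ φ with hg
  set c : ℝ := f X₁ with hc
  have hφ0 : φ 0 = X₁ := by simp [hφ]
  have hφ1 : φ 1 = X₂ := by simp [hφ, hd]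
  -- X₃ = φ t₃ for some t₃ ∉ {0, 1}
  obtain ⟨t₃, hφt₃, ht0, ht1⟩ : ∃ t₃, φ t₃ = X₃ ∧ t₃ ≠ 0 ∧ t₃ ≠ 1 := by
    rw [collinear_iff_of_mem (Set.mem_insert X₁ _)] at hcol
    obtain ⟨v, hv⟩ := hcol
    obtain ⟨r₂, hr₂⟩ := hv X₂ (by simp)
    obtain ⟨r₃, hr₃⟩ := hv X₃ (by simp)
    have hr₂0 : r₂ ≠ 0 := by
      rintro rfl; apply h12; rw [hr₂]; simp
    refine ⟨r₃ / r₂, ?_, ?_, ?_⟩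
    · have hdv : d = r₂ • v := by rw [hd, hr₂, vadd_eq_add]; abel
      show X₁ + (r₃ / r₂) • d = X₃
      rw [hdv, smul_smul, div_mul_cancel₀ _ hr₂0, hr₃, vadd_eq_add]
      exact add_comm _ _
    · intro h
      apply h13
      rw [div_eq_zero_iff] at h
      rcases h with h | h
      · rw [hr₃, h]; simp
      · exact absurd h hr₂0
    · intro h
      apply h23
      rw [div_eq_one_iff_eq hr₂0] at h
      rw [hr₂, hr₃, h]
  have hT0 : (0:ℝ) ∈ T := by simp [hT, Set.mem_preimage, hφ0, hX₁]
  have hT1 : (1:ℝ) ∈ T := by simp only [hT, Set.mem_preimage, hφ1]; exact hX₂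
  have hTt₃ : t₃ ∈ T := by simp only [hT, Set.mem_preimage, hφt₃]; exact hX₃
  have hg0 : g 0 = c := by simp [hg, hφ0, hc]
  have hg1 : g 1 = c := by simp [hg, hφ1, hc, ← hf12]
  have hgt₃ : g t₃ = c := by simp [hg, hφt₃, hc, ← hf13]
  -- T is open
  have hTopen : IsOpen T := by
    have : T = ⋂ i : Fin 3, {t : ℝ | 0 < φ t i} := by
      ext t
      simp only [hT, Set.mem_preimage, hS, Set.mem_setOf_eq, Set.mem_iInter]
      constructor
      · rintro ⟨h, -⟩ i; exact h i
      · intro h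
        refine ⟨h, ?_⟩
        have hs1 : ∑ i, X₁ i = 1 := by
          have := hX₁; rw [hS] at this; exact this.2
        have hs2 : ∑ i, X₂ i = 1 := by
          have := hX₂; rw [hS] at this; exact this.2
        have : ∑ i, φ t i = ∑ i, (X₁ i + t * (X₂ i - X₁ i)) := by
          apply Finset.sum_congr rfl
          intro i _
          simp only [hφ, hd, Pi.add_apply, Pi.smul_apply, Pi.sub_apply, smul_eq_mul]
        rw [this, Finset.sum_add_distrib, hs1, ← Finset.mul_sum]
        rw [Finset.sum_sub_distrib, hs1, hs2]
        ring
    rw [this]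
    apply isOpen_iInter_of_finite
    intro i
    apply isOpen_lt continuous_const
    exact (continuous_apply i).comp (continuous_const.add (continuous_id.smul continuous_const))
  -- T is convex
  have hφaff : ∀ a b t₁ t₂ : ℝ, a + b = 1 → φ (a * t₁ + b * t₂) = a • φ t₁ + b • φ t₂ := by
    intro a b t₁ t₂ hab
    funext i
    simp only [hφ, Pi.add_apply, Pi.smul_apply, smul_eq_mul]
    have : a * X₁ i + b * X₁ i = X₁ i := by rw [← add_mul, hab, one_mul]
    nlinarith [this]
  have hTconv : Convex ℝ T := by
    intro t₁ ht₁ t₂ ht₂ a b ha hb hab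
    simp only [hT, Set.mem_preimage] at *
    have := hφaff a b t₁ t₂ hab
    simp only [smul_eq_mul] at this ⊢
    rw [this]
    exact hconv.1 ht₁ ht₂ ha hb hab
  -- g is convex on T
  have hgconv : ConvexOn ℝ T g := by
    refine ⟨hTconv, ?_⟩
    intro t₁ ht₁ t₂ ht₂ a b ha hb hab
    simp only [hT, Set.mem_preimage] at ht₁ ht₂
    simp only [hg, Function.comp_apply, smul_eq_mul]
    rw [hφaff a b t₁ t₂ hab]
    exact hconv.2 ht₁ ht₂ ha hb hab
  -- g is analytic on T
  have hganal : AnalyticOnNhd ℝ g T := by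
    rw [← hTopen.analyticOn_iff_analyticOnNhd]
    apply hanalytic.comp
    · apply AnalyticOnNhd.analyticOn
      exact analyticOnNhd_const.add ((analyticOnNhd_id).smul analyticOnNhd_const)
    · intro t ht; exact ht
  -- find ordered triple p < m < q with g = c
  obtain ⟨p, m, q, hpm, hmq, hpT, hqT, hgp, hgm, hgq, hmT⟩ :
      ∃ p m q, p < m ∧ m < q ∧ p ∈ T ∧ q ∈ T ∧ g p = c ∧ g m = c ∧ g q = c ∧ m ∈ T := by
    rcases lt_trichotomy t₃ 0 with h | h | h
    · exact ⟨t₃, 0, 1, h, one_pos, hTt₃, hT1, hgt₃, hg0, hg1, hT0⟩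
    · exact absurd h ht0
    · rcases lt_trichotomy t₃ 1 with h' | h' | h'
      · exact ⟨0, t₃, 1, h, h', hT0, hT1, hg0, hgt₃, hg1, hTt₃⟩
      · exact absurd h' ht1
      · exact ⟨0, 1, t₃, one_pos, h', hT0, hTt₃, hg0, hg1, hgt₃, hT1⟩
  -- g = c on [p, q]
  have hconst : ∀ x, p ≤ x → x ≤ q → g x = c :=
    convexOn_const_between hgconv hpT hqT hpm hmq hgp hgm hgq
  -- identity theorem: g = c on all of T
  have hTpre : IsPreconnected T := hTconv.isPreconnected
  have heq : Set.EqOn g (fun _ => c) T := by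
    apply hganal.eqOn_of_preconnected_of_eventuallyEq analyticOnNhd_const hTpre hmT
    filter_upwards [Ioo_mem_nhds hpm hmq] with x hx
    exact hconst x hx.1.le hx.2.le
  -- apply hline to get f X₁ = 1
  have h1 : f X₁ = 1 := by
    apply hline X₁ X₂ hX₁ hX₂ h12
    intro t ht
    have : X₁ + t • (X₂ - X₁) = φ t := rfl
    rw [this] at ht ⊢
    have := heq (show t ∈ T from ht)
    simpa [hg, hc] using this
  linarith [hlt X₁ hX₁]
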